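/- Suppose char k does not divide the integer n ≥ 1. Let u_1, u_2 ∈ A be k-linear combinations of monomials of length exactly n, and let R be the k-span of all h^l_m(w) − w (w a monomial, 2 ≤ m ≤ len(w)). If η(u_1) − η(u_2) ∈ R, then u_1 − u_2 ∈ R. -/

import Mathlib

noncomputable section

abbrev FA (k : Type*) [Field k] (p : ℕ) := MonoidAlgebra k (FreeMonoid (Fin p))

def mon (k : Type*) [Field k] {p : ℕ} (l : List (Fin p)) : FA k p :=
  MonoidAlgebra.of k (FreeMonoid (Fin p)) (FreeMonoid.ofList l)

def etaRev (k : Type*) [Field k] {p : ℕ} : List (Fin p) → FA k p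
  | [] => 0
  | [a] => mon k [a]
  | a :: b :: l => mon k [a] * etaRev k (b :: l) - etaRev k (b :: l) * mon k [a]

def etaList (k : Type*) [Field k] {p : ℕ} (l : List (Fin p)) : FA k p :=
  etaRev k l.reverse

def etaLin (k : Type*) [Field k] (p : ℕ) : FA k p →ₗ[k] FA k p :=
  Finsupp.lift (FA k p) k (FreeMonoid (Fin p)) (fun w => etaList k (FreeMonoid.toList w)) ∘ₗ
    (MonoidAlgebra.coeffLinearEquiv k).toLinearMap

/-- The fold move `h^l_n` on a monomial (word). -/
def hl (k : Type*) [Field k] {p : ℕ} (n : ℕ) (l : List (Fin p)) : FA k p :=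
  if 2 ≤ n ∧ n ≤ l.length then
    ((-1 : k) ^ (n - 1)) •
      (mon k ((l.drop (n - 1)).take 1) * etaList k (l.take (n - 1)) * mon k (l.drop n))
  else mon k l

def hlLin (k : Type*) [Field k] (p n : ℕ) : FA k p →ₗ[k] FA k p :=
  Finsupp.lift (FA k p) k (FreeMonoid (Fin p)) (fun w => hl k n (FreeMonoid.toList w)) ∘ₗ
    (MonoidAlgebra.coeffLinearEquiv k).toLinearMap

/-- The span of the `H^l` relations `h^l_n(w) - w`. -/
def Rspan (k : Type*) [Field k] (p : ℕ) : Submodule k (FA k p) :=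
  Submodule.span k
    {x | ∃ (l : List (Fin p)) (n : ℕ), 2 ≤ n ∧ n ≤ l.length ∧ x = hl k n l - mon k l}

section Aux

variable (k : Type*) [Field k] {p : ℕ}

lemma mon_append (l1 l2 : List (Fin p)) : mon k (l1 ++ l2) = mon k l1 * mon k l2 := by
  unfold mon
  rw [← map_mul]
  rfl

lemma mon_nil : mon k ([] : List (Fin p)) = 1 := by
  unfold mon; exact map_one _

lemma etaLin_mon (l : List (Fin p)) : etaLin k p (mon k l) = etaList k l := by
  unfold etaLin mon
  rw [MonoidAlgebra.of_apply]
  erw [Finsupp.lift_apply, Finsupp.sum_single_index] <;> simp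

lemma etaRev_cons (a : Fin p) (t : List (Fin p)) (ht : t ≠ []) :
    etaRev k (a :: t) = mon k [a] * etaRev k t - etaRev k t * mon k [a] := by
  cases t with
  | nil => exact absurd rfl ht
  | cons b l => rfl

lemma rel_mem {l : List (Fin p)} {n : ℕ} (h2 : 2 ≤ n) (hn : n ≤ l.length) :
    hl k n l - mon k l ∈ Rspan k p :=
  Submodule.subset_span ⟨l, n, h2, hn, rfl⟩

lemma hl_mul {n : ℕ} {l : List (Fin p)} (h2 : 2 ≤ n) (hn : n ≤ l.length) (a : Fin p) :
    hl k n l * mon k [a] = hl k n (l ++ [a]) := by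
  have h1 : n - 1 ≤ l.length := le_trans (Nat.sub_le _ _) hn
  have hlt : n - 1 < l.length := lt_of_lt_of_le (Nat.sub_lt (by omega) one_pos) hn
  have hdrop : (l ++ [a]).drop (n - 1) = l.drop (n - 1) ++ [a] :=
    List.drop_append_of_le_length h1
  have htake1 : (l.drop (n - 1) ++ [a]).take 1 = (l.drop (n - 1)).take 1 :=
    List.take_append_of_le_length (by simp [List.length_drop]; omega)
  have htake : (l ++ [a]).take (n - 1) = l.take (n - 1) :=
    List.take_append_of_le_length h1
  have hdropn : (l ++ [a]).drop n = l.drop n ++ [a] :=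
    List.drop_append_of_le_length hn
  rw [hl, hl, if_pos ⟨h2, hn⟩, if_pos ⟨h2, by simp; omega⟩, hdrop, htake1, htake, hdropn,
    mon_append, smul_mul_assoc, mul_assoc, mul_assoc]

lemma Rspan_mul {x : FA k p} (hx : x ∈ Rspan k p) (a : Fin p) :
    x * mon k [a] ∈ Rspan k p := by
  induction hx using Submodule.span_induction with
  | mem y hy =>
    obtain ⟨l, n, h2, hn, rfl⟩ := hy
    rw [sub_mul, hl_mul k h2 hn a, ← mon_append]
    exact rel_mem k h2 (by simp; omega)
  | zero => simp [Rspan]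
  | add y z _ _ hy hz => rw [add_mul]; exact add_mem hy hz
  | smul c y _ hy => rw [smul_mul_assoc]; exact Submodule.smul_mem _ _ hy

lemma hl_snoc (t : List (Fin p)) (ht : t ≠ []) (a : Fin p) :
    hl k (t.length + 1) (t.reverse ++ [a]) = ((-1 : k) ^ t.length) • (mon k [a] * etaRev k t) := by
  have hL : 1 ≤ t.length := List.length_pos_iff.mpr ht
  have hlen : (t.reverse ++ [a]).length = t.length + 1 := by simp
  rw [hl, if_pos ⟨by omega, by omega⟩]
  have h1 : (t.reverse ++ [a]).drop (t.length + 1 - 1) = [a] := by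
    simpa using List.drop_left t.reverse [a]
  have h2 : (t.reverse ++ [a]).take (t.length + 1 - 1) = t.reverse := by
    simpa using List.take_left t.reverse [a]
  have h3 : (t.reverse ++ [a]).drop (t.length + 1) = [] := by
    apply List.drop_eq_nil_of_le; omega
  rw [h1, h2, h3, mon_nil, mul_one]
  simp [etaList, List.reverse_reverse]

lemma key (l : List (Fin p)) (hne : l ≠ []) :
    etaRev k l - ((-1 : k) ^ (l.length - 1) * (l.length : k)) • mon k l.reverse
      ∈ Rspan k p := by
  induction l with
  | nil => exact absurd rfl hne
  | cons a t ih =>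
    rcases eq_or_ne t ([] : List (Fin p)) with rfl | ht
    · simp [etaRev, Rspan]
    · have hL : 1 ≤ t.length := List.length_pos_iff.mpr ht
      set m : ℕ := t.length - 1 with hm
      have hmt : t.length = m + 1 := by omega
      set c : k := (-1 : k) ^ m with hcdef
      have hc : c * c = 1 := by
        rw [hcdef, ← pow_add]
        exact Even.neg_one_pow ⟨m, rfl⟩
      -- g1 : relation at the last position
      set A : FA k p := mon k [a] * etaRev k t with hA
      set B : FA k p := etaRev k t * mon k [a] with hB
      set M : FA k p := mon k (t.reverse ++ [a]) with hM
      have hg1 : (-c) • A - M ∈ Rspan k p := by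
        have := rel_mem k (l := t.reverse ++ [a]) (n := t.length + 1)
          (by omega) (by simp)
        rwa [hl_snoc k t ht a, hmt, pow_succ, ← hcdef, mul_neg_one, ← hA, ← hM] at this
      -- g2 : from IH multiplied by mon [a]
      have hg2 : B - (c * (t.length : k)) • M ∈ Rspan k p := by
        have := Rspan_mul k (ih ht) a
        rw [sub_mul, smul_mul_assoc, ← mon_append, ← hB, ← hM] at this
        exact this
      have hsum : (-c) • ((-c) • A - M) - (B - (c * (t.length : k)) • M)
          = etaRev k (a :: t)
            - ((-1 : k) ^ ((a :: t).length - 1) * ((a :: t).length : k)) • mon k (a :: t).reverse := by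
        rw [etaRev_cons k a t ht, ← hA, ← hB]
        have hrev : mon k (a :: t).reverse = M := by
          rw [hM]; simp
        rw [hrev]
        have hlen2 : ((a :: t).length : ℕ) = m + 2 := by simp [hmt]
        have hsign : (-1 : k) ^ ((a :: t).length - 1) = -c := by
          rw [hlen2]; simp [hcdef, pow_succ]
        rw [hsign, hlen2]
        rw [smul_sub, smul_smul, neg_mul_neg, hc, one_smul, hmt]
        push_cast
        module
      rw [← hsum]
      exact sub_mem (Submodule.smul_mem _ _ hg1) hg2

lemma eta_cong (n : ℕ) (hn : 1 ≤ n) (u : FA k p)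
    (hu : u ∈ Submodule.span k ((fun l : List (Fin p) => mon k l) '' {l | l.length = n})) :
    etaLin k p u - ((-1 : k) ^ (n - 1) * (n : k)) • u ∈ Rspan k p := by
  induction hu using Submodule.span_induction with
  | mem y hy =>
    obtain ⟨l, hl', rfl⟩ := hy
    have hne : l ≠ [] := by
      intro h; subst h; simp at hl'; omega
    have hln : l.length = n := hl'
    have := key k l.reverse (by simpa using hne)
    rw [List.reverse_reverse, List.length_reverse, hln] at this
    simpa [etaLin_mon, etaList] using this
  | zero => simp [Rspan]
  | add y z _ _ hy hz =>
    have : etaLin k p (y + z) - ((-1 : k) ^ (n - 1) * (n : k)) • (y + z)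
        = (etaLin k p y - ((-1 : k) ^ (n - 1) * (n : k)) • y)
          + (etaLin k p z - ((-1 : k) ^ (n - 1) * (n : k)) • z) := by
      rw [map_add]; module
    rw [this]; exact add_mem hy hz
  | smul c y _ hy =>
    have : etaLin k p (c • y) - ((-1 : k) ^ (n - 1) * (n : k)) • (c • y)
        = c • (etaLin k p y - ((-1 : k) ^ (n - 1) * (n : k)) • y) := by
      rw [map_smul]; module
    rw [this]; exact Submodule.smul_mem _ _ hy

end Aux

/-- If char k does not divide n and u₁, u₂ are linear combinations of monomials of
length n, then η(u₁) ≡ η(u₂) mod R implies u₁ ≡ u₂ mod R. -/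
theorem eta_injective_mod_R (k : Type*) [Field k] (hk : ringChar k ≠ 2) {p n : ℕ}
    (hn : 1 ≤ n) (hchar : ¬ (ringChar k ∣ n)) (u₁ u₂ : FA k p)
    (h₁ : u₁ ∈ Submodule.span k ((fun l : List (Fin p) => mon k l) '' {l | l.length = n}))
    (h₂ : u₂ ∈ Submodule.span k ((fun l : List (Fin p) => mon k l) '' {l | l.length = n}))
    (h : etaLin k p u₁ - etaLin k p u₂ ∈ Rspan k p) :
    u₁ - u₂ ∈ Rspan k p := by
  set c : k := (-1 : k) ^ (n - 1) * (n : k) with hc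
  have hne : (n : k) ≠ 0 := fun h0 => hchar (ringChar.dvd h0)
  have hcne : c ≠ 0 := by
    rw [hc]
    exact mul_ne_zero (pow_ne_zero _ (by norm_num)) hne
  have e1 := eta_cong k n hn u₁ h₁
  have e2 := eta_cong k n hn u₂ h₂
  have hmem : c • (u₁ - u₂) ∈ Rspan k p := by
    have heq : c • (u₁ - u₂)
        = (etaLin k p u₁ - etaLin k p u₂)
          - (etaLin k p u₁ - c • u₁) + (etaLin k p u₂ - c • u₂) := by module
    rw [heq]
    exact add_mem (sub_mem h e1) e2
  have : u₁ - u₂ = c⁻¹ • (c • (u₁ - u₂)) := by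
    rw [smul_smul, inv_mul_cancel₀ hcne, one_smul]
  rw [this]
  exact Submodule.smul_mem _ _ hmem
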